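/- For odd prime power q, SRIM⁻_n(q) + SRIM⁺_n(q) equals IM_1(q) − 1 when n = 1, and equals IM_n(q) when n > 1. -/

import Mathlib

open Polynomial

namespace SrimAux

variable {F : Type*} [Field F]

/-- `QQ n g = X^n * g(X + 1/X)` -/
noncomputable def QQ (n : ℕ) (g : F[X]) : F[X] :=
  ∑ i ∈ Finset.range (n + 1), C (g.coeff i) * (X ^ 2 + 1) ^ i * X ^ (n - i)

lemma monic_X_sq_add_one : ((X : F[X]) ^ 2 + 1).Monic := by
  have := monic_X_pow_add_C (R := F) (a := 1) (n := 2) (by norm_num)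
  simpa using this

lemma natDegree_X_sq_add_one : ((X : F[X]) ^ 2 + 1).natDegree = 2 := by
  have := natDegree_X_pow_add_C (R := F) (r := 1) (n := 2)
  simpa using this

lemma QQ_coeff_add {n : ℕ} {g : F[X]} (hd : g.natDegree ≤ n) :
    (QQ n g).coeff (n + g.natDegree) = g.leadingCoeff := by
  classical
  set d := g.natDegree with hdd
  rw [QQ, finset_sum_coeff]
  rw [Finset.sum_eq_single d]
  · rw [mul_assoc, coeff_C_mul, coeff_mul_X_pow' ((X^2+1)^d) (n-d) (n+d)]
    rw [if_pos (by omega)]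
    have h1 : n + d - (n - d) = 2 * d := by omega
    rw [h1]
    have h2 : (((X : F[X]) ^ 2 + 1) ^ d).coeff (2 * d) = 1 := by
      have hm : (((X : F[X]) ^ 2 + 1) ^ d).Monic := monic_X_sq_add_one.pow d
      have hdeg : (((X : F[X]) ^ 2 + 1) ^ d).natDegree = 2 * d := by
        rw [monic_X_sq_add_one.natDegree_pow, natDegree_X_sq_add_one]; ring
      have := hm.coeff_natDegree
      rwa [hdeg] at this
    rw [h2, mul_one, leadingCoeff]
  · intro i hi hne
    rw [Finset.mem_range] at hi
    rcases lt_or_gt_of_ne hne with hlt | hgt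
    · -- i < d : coefficient of high degree vanishes
      rw [mul_assoc, coeff_C_mul, coeff_mul_X_pow' ((X^2+1)^i) (n-i) (n+d)]
      rw [if_pos (by omega)]
      have h1 : (((X : F[X]) ^ 2 + 1) ^ i).coeff (n + d - (n - i)) = 0 := by
        apply coeff_eq_zero_of_natDegree_lt
        have hdeg : (((X : F[X]) ^ 2 + 1) ^ i).natDegree = 2 * i := by
          rw [monic_X_sq_add_one.natDegree_pow, natDegree_X_sq_add_one]; ring
        rw [hdeg]; omega
      rw [h1, mul_zero]
    · -- i > d : coefficient of g vanishes
      rw [coeff_eq_zero_of_natDegree_lt (by omega : g.natDegree < i)]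
      simp
  · intro hd'
    exfalso; exact hd' (Finset.mem_range.mpr (by omega))

lemma QQ_coeff_zero {n : ℕ} (g : F[X]) : (QQ n g).coeff 0 = g.coeff n := by
  classical
  rw [QQ, finset_sum_coeff]
  rw [Finset.sum_eq_single n]
  · rw [mul_assoc, coeff_C_mul, coeff_mul_X_pow' ((X^2+1)^n) (n-n) 0]
    rw [if_pos (by omega)]
    have : (0 : ℕ) - (n - n) = 0 := by omega
    rw [this]
    have h2 : (((X : F[X]) ^ 2 + 1) ^ n).coeff 0 = 1 := by
      rw [coeff_zero_eq_eval_zero]; simp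
    rw [h2, mul_one]
  · intro i hi hne
    rw [Finset.mem_range] at hi
    rw [mul_assoc, coeff_C_mul, coeff_mul_X_pow' ((X^2+1)^i) (n-i) 0]
    rw [if_neg (by omega)]
    rw [mul_zero]
  · intro hd'
    exfalso; exact hd' (Finset.mem_range.mpr (by omega))

lemma QQ_natDegree_le {n : ℕ} (g : F[X]) (hd : g.natDegree ≤ n) :
    (QQ n g).natDegree ≤ n + g.natDegree := by
  classical
  apply Polynomial.natDegree_sum_le_of_forall_le
  intro i hi
  rw [Finset.mem_range] at hi
  by_cases hgi : g.natDegree < i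
  · rw [coeff_eq_zero_of_natDegree_lt hgi]
    simp
  · push_neg at hgi
    calc (C (g.coeff i) * (X ^ 2 + 1) ^ i * X ^ (n - i)).natDegree
        ≤ (C (g.coeff i) * (X ^ 2 + 1) ^ i).natDegree + (X ^ (n-i) : F[X]).natDegree :=
          natDegree_mul_le
      _ ≤ ((C (g.coeff i)).natDegree + (((X:F[X]) ^ 2 + 1) ^ i).natDegree) + (n - i) := by
          gcongr
          · exact natDegree_mul_le
          · exact (natDegree_X_pow _).le
      _ ≤ (0 + 2 * i) + (n - i) := by
          gcongr
          · exact (natDegree_C _).le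
          · calc (((X:F[X]) ^ 2 + 1) ^ i).natDegree = 2 * i := by
                  rw [monic_X_sq_add_one.natDegree_pow, natDegree_X_sq_add_one]; ring
              _ ≤ 2 * i := le_rfl
      _ ≤ n + g.natDegree := by omega

lemma QQ_natDegree {n : ℕ} {g : F[X]} (hm : g.Monic) (hd : g.natDegree = n) :
    (QQ n g).natDegree = 2 * n := by
  have h1 : (QQ n g).natDegree ≤ 2 * n := by
    have := QQ_natDegree_le g hd.le
    omega
  have h2 : (QQ n g).coeff (2 * n) = 1 := by
    have := QQ_coeff_add (g := g) (n := n) hd.le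
    rw [hd, hm.leadingCoeff] at this
    rw [(by ring : 2 * n = n + n), this]
  have : 2 * n ≤ (QQ n g).natDegree := le_natDegree_of_ne_zero (by rw [h2]; exact one_ne_zero)
  omega

lemma QQ_monic {n : ℕ} {g : F[X]} (hm : g.Monic) (hd : g.natDegree = n) :
    (QQ n g).Monic := by
  apply monic_of_natDegree_le_of_coeff_eq_one (2 * n) (QQ_natDegree hm hd).le
  have := QQ_coeff_add (g := g) (n := n) hd.le
  rw [hd, hm.leadingCoeff] at this
  rwa [(by ring : 2 * n = n + n)]

end SrimAux

namespace SrimAux2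
open SrimAux

variable {F : Type*} [Field F]

lemma reflect_sum {N : ℕ} {s : Finset ℕ} (f : ℕ → F[X]) :
    reflect N (∑ i ∈ s, f i) = ∑ i ∈ s, reflect N (f i) := by
  classical
  induction s using Finset.induction_on with
  | empty => simp [reflect_zero]
  | insert _ _ h ih => rw [Finset.sum_insert h, Finset.sum_insert h, reflect_add, ih]

lemma reflect_sub {N : ℕ} (f g : F[X]) :
    reflect N (f - g) = reflect N f - reflect N g := by
  ext i
  simp [coeff_reflect, coeff_sub]

lemma reflect_X_sq_add_one_pow (i : ℕ) :
    reflect (2 * i) (((X : F[X]) ^ 2 + 1) ^ i) = ((X : F[X]) ^ 2 + 1) ^ i := by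
  induction i with
  | zero => simp [reflect_one]
  | succ k ih =>
    have h1 : ((X : F[X]) ^ 2 + 1) ^ (k + 1) = ((X : F[X]) ^ 2 + 1) * ((X : F[X]) ^ 2 + 1) ^ k := by
      ring
    have h2 : 2 * (k + 1) = 2 + 2 * k := by ring
    rw [h1, h2, reflect_mul _ _ (by
        have := natDegree_X_sq_add_one (F := F); omega) (by
        have : (((X:F[X]) ^ 2 + 1) ^ k).natDegree = 2 * k := by
          rw [monic_X_sq_add_one.natDegree_pow, natDegree_X_sq_add_one]; ring
        omega)]
    rw [ih]
    congr 1
    have : ((X : F[X]) ^ 2 + 1) = X ^ 2 + X ^ 0 := by simp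
    rw [this, reflect_add, reflect_monomial, reflect_monomial]
    have r1 : revAt 2 2 = 0 := by rw [revAt_le (by omega)]
    have r2 : revAt 2 0 = 2 := by rw [revAt_le (by omega)]
    rw [r1, r2, add_comm]

lemma reflect_QQ {n : ℕ} (g : F[X]) (hd : g.natDegree ≤ n) :
    reflect (2 * n) (QQ n g) = QQ n g := by
  rw [QQ, reflect_sum]
  apply Finset.sum_congr rfl
  intro i hi
  rw [Finset.mem_range] at hi
  rw [mul_assoc, reflect_C_mul]
  congr 1
  have hsplit : 2 * n = 2 * i + 2 * (n - i) := by omega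
  rw [hsplit, reflect_mul _ _ (by
      have : (((X:F[X]) ^ 2 + 1) ^ i).natDegree = 2 * i := by
        rw [monic_X_sq_add_one.natDegree_pow, natDegree_X_sq_add_one]; ring
      omega) (by
      rw [natDegree_X_pow]; omega)]
  rw [reflect_X_sq_add_one_pow, reflect_monomial]
  rw [revAt_le (by omega)]
  congr 2
  omega

lemma reverse_QQ {n : ℕ} {g : F[X]} (hm : g.Monic) (hd : g.natDegree = n) :
    (QQ n g).reverse = QQ n g := by
  rw [reverse, QQ_natDegree hm hd, reflect_QQ g hd.le]

lemma QQ_add {n : ℕ} (g h : F[X]) : QQ n (g + h) = QQ n g + QQ n h := by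
  rw [QQ, QQ, QQ, ← Finset.sum_add_distrib]
  apply Finset.sum_congr rfl
  intro i _
  rw [coeff_add, C_add]
  ring

lemma QQ_sub {n : ℕ} (g h : F[X]) : QQ n (g - h) = QQ n g - QQ n h := by
  rw [QQ, QQ, QQ, ← Finset.sum_sub_distrib]
  apply Finset.sum_congr rfl
  intro i _
  rw [coeff_sub, C_sub]
  ring

lemma QQ_zero {n : ℕ} : QQ n (0 : F[X]) = 0 := by
  rw [QQ]
  apply Finset.sum_eq_zero
  intro i _
  simp

lemma QQ_eq_zero_iff {n : ℕ} {g : F[X]} (hd : g.natDegree ≤ n) : QQ n g = 0 ↔ g = 0 := by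
  constructor
  · intro h
    by_contra hg
    have := QQ_coeff_add (g := g) (n := n) hd
    rw [h, coeff_zero] at this
    exact (leadingCoeff_ne_zero.mpr hg) this.symm
  · intro h; rw [h, QQ_zero]

lemma QQ_inj {n : ℕ} {g h : F[X]} (hg : g.natDegree ≤ n) (hh : h.natDegree ≤ n)
    (heq : QQ n g = QQ n h) : g = h := by
  have hsub : QQ n (g - h) = 0 := by rw [QQ_sub, heq, sub_self]
  have hdeg : (g - h).natDegree ≤ n := le_trans (natDegree_sub_le g h) (by omega)
  have := (QQ_eq_zero_iff hdeg).mp hsub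
  exact sub_eq_zero.mp this

lemma QQ_succ {n : ℕ} (g : F[X]) (hd : g.natDegree ≤ n) :
    QQ (n + 1) g = X * QQ n g := by
  rw [QQ, QQ, Finset.sum_range_succ]
  rw [coeff_eq_zero_of_natDegree_lt (by omega : g.natDegree < n + 1)]
  simp only [map_zero, zero_mul, add_zero]
  rw [Finset.mul_sum]
  apply Finset.sum_congr rfl
  intro i hi
  rw [Finset.mem_range] at hi
  have : n + 1 - i = (n - i) + 1 := by omega
  rw [this, pow_succ]
  ring

lemma QQ_C_mul_X_pow {n : ℕ} (c : F) :
    QQ (n + 1) (C c * X ^ (n + 1)) = C c * (X ^ 2 + 1) ^ (n + 1) := by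
  classical
  rw [QQ, Finset.sum_eq_single (n + 1)]
  · rw [coeff_C_mul, coeff_X_pow, if_pos rfl, mul_one]
    simp
  · intro i hi hne
    rw [coeff_C_mul, coeff_X_pow, if_neg hne]
    simp
  · intro h
    exact absurd (Finset.mem_range.mpr (by omega)) h

/-- Every self-reciprocal polynomial (w.r.t. degree `2n`) is of the form `QQ n g`. -/
lemma exists_QQ {n : ℕ} (f : F[X]) (hdeg : f.natDegree ≤ 2 * n)
    (hrefl : reflect (2 * n) f = f) : ∃ g : F[X], g.natDegree ≤ n ∧ QQ n g = f := by
  induction n generalizing f with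
  | zero =>
    refine ⟨f, by simpa using hdeg, ?_⟩
    rw [QQ]
    simp only [zero_add, Finset.range_one, Finset.sum_singleton, pow_zero, one_mul,
      Nat.sub_zero, mul_one]
    exact (Polynomial.eq_C_of_natDegree_le_zero (by simpa using hdeg)).symm
  | succ n ih =>
    set c := f.coeff 0 with hc
    have hcoefftop : f.coeff (2 * (n + 1)) = c := by
      conv_lhs => rw [← hrefl]
      rw [coeff_reflect, revAt_le le_rfl]
      simp
      exact hc.symm
    set f' := f - C c * (X ^ 2 + 1) ^ (n + 1) with hf'
    have hpowdeg : ((((X : F[X]) ^ 2 + 1)) ^ (n + 1)).natDegree = 2 * (n + 1) := by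
      rw [monic_X_sq_add_one.natDegree_pow, natDegree_X_sq_add_one]; ring
    have hpowmonic : ((((X : F[X]) ^ 2 + 1)) ^ (n + 1)).Monic := monic_X_sq_add_one.pow _
    have hrefl' : reflect (2 * (n + 1)) f' = f' := by
      rw [hf', reflect_sub, hrefl, reflect_C_mul, reflect_X_sq_add_one_pow]
    have hdeg'2 : f'.natDegree ≤ 2 * (n + 1) := by
      apply le_trans (natDegree_sub_le _ _)
      apply max_le hdeg
      apply le_trans natDegree_mul_le
      rw [hpowdeg, natDegree_C]
      omega
    have hcoeff_top' : f'.coeff (2 * (n + 1)) = 0 := by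
      rw [hf', coeff_sub, hcoefftop, coeff_C_mul]
      rw [← hpowdeg, hpowmonic.coeff_natDegree, mul_one, sub_self]
    have hcoeff_zero' : f'.coeff 0 = 0 := by
      rw [hf', coeff_sub, coeff_C_mul, ← hc]
      have : ((((X : F[X]) ^ 2 + 1)) ^ (n + 1)).coeff 0 = 1 := by
        rw [coeff_zero_eq_eval_zero]; simp
      rw [this, mul_one, sub_self]
    have hdeg' : f'.natDegree ≤ 2 * n + 1 := by
      rw [natDegree_le_iff_coeff_eq_zero]
      intro N hN
      rcases eq_or_lt_of_le (by omega : 2 * n + 2 ≤ N) with h | h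
      · have hN' : N = 2 * (n + 1) := by omega
        rw [hN']
        exact hcoeff_top'
      · exact coeff_eq_zero_of_natDegree_lt (by omega)
    set h := f'.divX with hh
    have hXh : X * h = f' := by
      have := Polynomial.X_mul_divX_add f'
      rw [hcoeff_zero'] at this
      simpa using this
    have hhdeg : h.natDegree ≤ 2 * n := by
      rcases eq_or_ne h 0 with h0 | h0
      · rw [h0]; simp
      · have : f'.natDegree = h.natDegree + 1 := by
          rw [← hXh, natDegree_X_mul h0]
        omega
    have hhrefl : reflect (2 * n) h = h := by
      have e2 : reflect 2 (X : F[X]) = X := by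
        have hX1 : (X : F[X]) = X ^ 1 := (pow_one X).symm
        rw [hX1, reflect_monomial, revAt_le (by omega)]
      have e1 : reflect (2 * (n + 1)) (X * h) = X * reflect (2 * n) h := by
        have h0 := reflect_mul (X : F[X]) h (F := 2) (G := 2 * n)
          (by rw [natDegree_X]; omega) hhdeg
        rw [e2] at h0
        rw [(by ring : 2 * (n + 1) = 2 + 2 * n)]
        exact h0
      have e5 : X * reflect (2 * n) h = X * h := by rw [← e1, hXh, hrefl']
      exact mul_left_cancel₀ X_ne_zero e5
    obtain ⟨g₁, hg₁deg, hg₁⟩ := ih h hhdeg hhrefl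
    refine ⟨g₁ + C c * X ^ (n + 1), ?_, ?_⟩
    · apply le_trans (natDegree_add_le _ _)
      apply max_le (by omega)
      apply le_trans natDegree_mul_le
      rw [natDegree_C, natDegree_X_pow]
      omega
    · rw [QQ_add, QQ_C_mul_X_pow, QQ_succ g₁ hg₁deg, hg₁, hXh, hf']
      ring

end SrimAux2

namespace SrimAux3
open SrimAux SrimAux2 LaurentPolynomial

variable {F : Type*} [Field F]

noncomputable def LL : F[X] →+* F[T;T⁻¹] :=
  eval₂RingHom (LaurentPolynomial.C) (T 1 + T (-1))

lemma T_neg_one_mul : (T (-1) : F[T;T⁻¹]) * (T 2 + 1) = T 1 + T (-1) := by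
  rw [mul_add, mul_one, ← T_add]
  norm_num

lemma toLaurent_QQ {n : ℕ} (g : F[X]) (hd : g.natDegree ≤ n) :
    toLaurent (QQ n g) = T n * LL g := by
  rw [QQ, map_sum]
  have hLL : LL g = ∑ i ∈ Finset.range (n + 1),
      LaurentPolynomial.C (g.coeff i) * (T 1 + T (-1)) ^ i := by
    rw [LL, coe_eval₂RingHom, eval₂_eq_sum_range' _ (Nat.lt_succ_of_le hd) _]
  rw [hLL, Finset.mul_sum]
  apply Finset.sum_congr rfl
  intro i hi
  rw [Finset.mem_range] at hi
  rw [map_mul, map_mul, Polynomial.toLaurent_C, Polynomial.toLaurent_X_pow]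
  have e1 : ((T 1 + T (-1)) ^ i : F[T;T⁻¹]) = T (-i) * (T 2 + 1) ^ i := by
    rw [← T_neg_one_mul, mul_pow, T_pow]
    norm_num
  have e2 : toLaurent (((X : F[X]) ^ 2 + 1)) = T 2 + 1 := by
    rw [map_add, Polynomial.toLaurent_X_pow, map_one]
    norm_num
  rw [map_pow, e2, e1]
  rw [show (T ((n : ℤ)) : F[T;T⁻¹]) * (LaurentPolynomial.C (g.coeff i) * (T (-i) * (T 2 + 1) ^ i))
      = LaurentPolynomial.C (g.coeff i) * (T 2 + 1) ^ i * (T (n : ℤ) * T (-i)) by ring]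
  rw [← T_add]
  congr 2
  omega

lemma QQ_mul {a b : ℕ} {g h : F[X]} (hg : g.natDegree ≤ a) (hh : h.natDegree ≤ b) :
    QQ (a + b) (g * h) = QQ a g * QQ b h := by
  apply Polynomial.toLaurent_injective
  rw [map_mul, toLaurent_QQ g hg, toLaurent_QQ h hh,
    toLaurent_QQ (g * h) (le_trans natDegree_mul_le (by omega))]
  rw [map_mul]
  push_cast
  rw [T_add]
  ring

end SrimAux3

namespace SrimAux4
open SrimAux SrimAux2 SrimAux3

variable {F : Type*} [Field F] {K : Type*} [Field K] [Algebra F K]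

lemma natDegree_reflect_le {f : F[X]} {N : ℕ} (h : f.natDegree ≤ N) :
    (reflect N f).natDegree ≤ N := by
  rw [natDegree_le_iff_coeff_eq_zero]
  intro M hM
  rw [coeff_reflect]
  have : revAt N M = M := by
    rw [← revAtFun_eq, revAtFun, if_neg (by omega)]
  rw [this]
  exact coeff_eq_zero_of_natDegree_lt (by omega)

lemma aeval_reflect {f : F[X]} {N : ℕ} (h : f.natDegree ≤ N) (u : K) (hu : u ≠ 0) :
    aeval u (reflect N f) = u ^ N * aeval u⁻¹ f := by
  rw [aeval_eq_sum_range' (n := N + 1) (by have := natDegree_reflect_le h; omega) u,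
    aeval_eq_sum_range' (n := N + 1) (by omega) u⁻¹]
  rw [Finset.mul_sum]
  rw [← Finset.sum_range_reflect]
  apply Finset.sum_congr rfl
  intro j hj
  rw [Finset.mem_range] at hj
  have e1 : N + 1 - 1 - j = N - j := by omega
  rw [e1, coeff_reflect, revAt_le (by omega : N - j ≤ N)]
  have e2 : N - (N - j) = j := by omega
  rw [e2]
  rw [mul_smul_comm]
  congr 1
  rw [inv_pow, ← pow_sub₀ u hu (by omega : j ≤ N)]

lemma aeval_QQ {n : ℕ} {g : F[X]} (hd : g.natDegree ≤ n) (u : K) (hu : u ≠ 0) :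
    aeval u (QQ n g) = u ^ n * aeval (u + u⁻¹) g := by
  rw [QQ, map_sum, aeval_eq_sum_range' (n := n + 1) (Nat.lt_succ_of_le hd) (u + u⁻¹),
    Finset.mul_sum]
  apply Finset.sum_congr rfl
  intro i hi
  rw [Finset.mem_range] at hi
  rw [map_mul, map_mul, aeval_C, map_pow, map_pow, map_add, map_pow, map_one, aeval_X]
  have e1 : (u ^ 2 + 1) = u * (u + u⁻¹) := by
    field_simp
  rw [e1, mul_pow]
  rw [mul_smul_comm, Algebra.smul_def]
  rw [show algebraMap F K (g.coeff i) * (u ^ i * (u + u⁻¹) ^ i) * u ^ (n - i)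
      = algebraMap F K (g.coeff i) * ((u ^ i * u ^ (n - i)) * (u + u⁻¹) ^ i) by ring]
  rw [← pow_add]
  have e2 : i + (n - i) = n := by omega
  rw [e2]

/-- `p* / p(0)`, the normalized reciprocal. -/
noncomputable def hatp (p : F[X]) : F[X] := C (p.coeff 0)⁻¹ * p.reverse

lemma reverse_eq_mirror {p : F[X]} (h0 : p.coeff 0 ≠ 0) : p.reverse = p.mirror := by
  rw [mirror, natTrailingDegree_eq_zero.mpr (Or.inr h0), pow_zero, mul_one]

variable {p : F[X]} (hm : p.Monic) (h0 : p.coeff 0 ≠ 0)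

include hm h0

lemma hatp_natDegree : (hatp p).natDegree = p.natDegree := by
  rw [hatp, natDegree_C_mul (inv_ne_zero h0), reverse_natDegree,
    natTrailingDegree_eq_zero.mpr (Or.inr h0)]
  omega

lemma hatp_coeff_zero : (hatp p).coeff 0 = (p.coeff 0)⁻¹ := by
  rw [hatp, coeff_C_mul, coeff_zero_reverse, hm.leadingCoeff, mul_one]

lemma hatp_monic : (hatp p).Monic := by
  have : (hatp p).leadingCoeff = 1 := by
    rw [hatp, leadingCoeff_mul, leadingCoeff_C, reverse_leadingCoeff, trailingCoeff,
      natTrailingDegree_eq_zero.mpr (Or.inr h0), inv_mul_cancel₀ h0]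
  exact this

lemma mirror_hatp : (hatp p).mirror = C (p.coeff 0)⁻¹ * p := by
  rw [hatp, mirror_mul_of_domain, mirror_C, reverse_eq_mirror h0, mirror_mirror]

lemma hatp_hatp : hatp (hatp p) = p := by
  have h0' : (hatp p).coeff 0 ≠ 0 := by
    rw [hatp_coeff_zero hm h0]; exact inv_ne_zero h0
  rw [show hatp (hatp p) = C ((hatp p).coeff 0)⁻¹ * (hatp p).reverse from rfl]
  rw [hatp_coeff_zero hm h0, inv_inv, reverse_eq_mirror h0', mirror_hatp hm h0,
    ← mul_assoc, ← map_mul, mul_inv_cancel₀ h0, map_one, one_mul]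

lemma hatp_ne_zero : hatp p ≠ 0 := (hatp_monic hm h0).ne_zero

omit hm h0 in
lemma isUnit_of_isUnit_mirror {a : F[X]} (h : IsUnit a.mirror) : IsUnit a := by
  rcases Polynomial.isUnit_iff.mp h with ⟨u, hu, hcu⟩
  rw [← a.mirror_mirror, ← hcu, mirror_C]
  exact Polynomial.isUnit_C.mpr hu

lemma hatp_irreducible (hp : Irreducible p) : Irreducible (hatp p) := by
  constructor
  · intro hu
    have h1 := natDegree_eq_zero_of_isUnit hu
    rw [hatp_natDegree hm h0] at h1
    have h2 := hp.natDegree_pos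
    omega
  · intro a b hab
    have hmm : C (p.coeff 0)⁻¹ * p = a.mirror * b.mirror := by
      rw [← mirror_mul_of_domain, ← hab, mirror_hatp hm h0]
    have hpeq : p = (C (p.coeff 0) * a.mirror) * b.mirror := by
      have h3 := congrArg (fun q => C (p.coeff 0) * q) hmm
      rw [← mul_assoc, ← map_mul, mul_inv_cancel₀ h0, map_one, one_mul] at h3
      conv_lhs => rw [h3]
      ring
    rcases hp.isUnit_or_isUnit hpeq with h | h
    · exact Or.inl (isUnit_of_isUnit_mirror (IsUnit.mul_iff.mp h).2)
    · exact Or.inr (isUnit_of_isUnit_mirror h)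

end SrimAux4

namespace SrimAux5
open SrimAux SrimAux2 SrimAux3 SrimAux4

variable {F : Type*} [Field F]

lemma eq_of_monic_dvd {q P : F[X]} (hq : q.Monic) (hP : P.Monic) (hdvd : q ∣ P)
    (hdeg : P.natDegree ≤ q.natDegree) : q = P := by
  obtain ⟨r, hr⟩ := hdvd
  have hr0 : r ≠ 0 := by
    intro h
    rw [h, mul_zero] at hr
    exact hP.ne_zero hr
  have hdegs : P.natDegree = q.natDegree + r.natDegree := by
    rw [hr, natDegree_mul hq.ne_zero hr0]
  have hrdeg : r.natDegree = 0 := by omega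
  have hlead : r.leadingCoeff = 1 := by
    have := hP.leadingCoeff
    rw [hr, leadingCoeff_mul, hq.leadingCoeff, one_mul] at this
    exact this
  have : r = 1 := by
    rw [Polynomial.eq_C_of_natDegree_le_zero hrdeg.le]
    rw [leadingCoeff, hrdeg] at hlead
    rw [hlead, map_one]
  rw [hr, this, mul_one]

variable {p : F[X]}

lemma aeval_root (hpm : p.Monic) : aeval (AdjoinRoot.root p) p = 0 := by
  rw [aeval_def, AdjoinRoot.algebraMap_eq]
  exact AdjoinRoot.eval₂_root p

theorem key {n : ℕ} (hn : 1 ≤ n) {g : F[X]} (h2 : (2 : F) ≠ 0)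
    (hg : Irreducible g) (hgm : g.Monic) (hgd : g.natDegree = n)
    (hp : Irreducible p) (hpm : p.Monic) (hdvd : p ∣ QQ n g) :
    QQ n g = p ∨
    (p.natDegree = n ∧ p.coeff 0 ≠ 0 ∧ hatp p ≠ p ∧ QQ n g = p * hatp p) ∨
    (n = 1 ∧ (g = X - C 2 ∨ g = X + C 2)) := by
  haveI : Fact (Irreducible p) := ⟨hp⟩
  set K := AdjoinRoot p with hK
  set α := AdjoinRoot.root p with hα
  have hα0 : aeval α p = 0 := aeval_root hpm
  have hQmonic : (QQ n g).Monic := QQ_monic hgm hgd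
  have hQdeg : (QQ n g).natDegree = 2 * n := QQ_natDegree hgm hgd
  have hgcn : g.coeff n = 1 := by
    have := hgm.coeff_natDegree
    rwa [hgd] at this
  have hQcoeff0 : (QQ n g).coeff 0 = 1 := by rw [QQ_coeff_zero, hgcn]
  have hQα : aeval α (QQ n g) = 0 := by
    obtain ⟨r, hr⟩ := hdvd
    rw [hr, map_mul, hα0, zero_mul]
  have hαne : α ≠ 0 := by
    intro h
    rw [h, aeval_def, eval₂_at_zero, hQcoeff0, map_one] at hQα
    exact one_ne_zero hQα
  set β := α + α⁻¹ with hβ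
  have hβg : aeval β g = 0 := by
    have h1 := aeval_QQ hgd.le α hαne
    rw [hQα] at h1
    rcases mul_eq_zero.mp h1.symm with h | h
    · exact absurd h (pow_ne_zero n hαne)
    · exact h
  haveI : FiniteDimensional F K := (AdjoinRoot.powerBasis hpm.ne_zero).finite
  have hfinrank : Module.finrank F K = p.natDegree := by
    rw [(AdjoinRoot.powerBasis hpm.ne_zero).finrank]
    rfl
  have hβint : IsIntegral F β := IsIntegral.of_finite F β
  have hming : minpoly F β = g := (minpoly.eq_of_irreducible_of_monic hg hβg hgm).symm
  have hdvddeg : n ∣ p.natDegree := by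
    have := minpoly.degree_dvd hβint
    rwa [hming, hgd, hfinrank] at this
  have hdegle : p.natDegree ≤ 2 * n := by
    have := natDegree_le_of_dvd hdvd hQmonic.ne_zero
    omega
  have hppos : 0 < p.natDegree := hp.natDegree_pos
  have hdeg_cases : p.natDegree = n ∨ p.natDegree = 2 * n := by
    obtain ⟨c, hc⟩ := hdvddeg
    have hc2 : c = 1 ∨ c = 2 := by
      have hcpos : 1 ≤ c := by
        rcases Nat.eq_zero_or_pos c with h | h
        · exfalso; rw [h, mul_zero] at hc; omega
        · exact h
      have hcle : c ≤ 2 := by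
        by_contra hgt
        push_neg at hgt
        have h4 : 3 * n ≤ c * n := Nat.mul_le_mul_right n hgt
        have h5 : c * n = n * c := Nat.mul_comm c n
        omega
      omega
    rcases hc2 with h | h <;> [left; right] <;> subst h <;> omega
  rcases hdeg_cases with hdn | hd2n
  · -- degree n case
    have hc0 : p.coeff 0 ≠ 0 := by
      obtain ⟨r, hr⟩ := hdvd
      have h1 : p.coeff 0 * r.coeff 0 = 1 := by
        rw [← mul_coeff_zero, ← hr, hQcoeff0]
      exact left_ne_zero_of_mul_eq_one h1
    by_cases hsym : hatp p = p
    · -- exceptional case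
      right; right
      set c := p.coeff 0 with hcdef
      have hrevp : p.reverse = C c * p := by
        conv_lhs => rw [show p.reverse = C c * (C c⁻¹ * p.reverse) by
          rw [← mul_assoc, ← map_mul, mul_inv_cancel₀ hc0, map_one, one_mul]]
        rw [show C c⁻¹ * p.reverse = hatp p from rfl, hsym]
      have hcc : c * c = 1 := by
        have h1 := congrArg (fun q => Polynomial.coeff q 0) hrevp
        simp only [coeff_zero_reverse, coeff_C_mul] at h1
        rw [hpm.leadingCoeff] at h1
        exact h1.symm
      have hreflp : reflect p.natDegree p = C c * p := by
        rw [← hrevp]; rfl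
      rcases mul_self_eq_one_iff.mp hcc with hc1 | hcm1
      · -- c = 1 : p self-reciprocal
        rw [hc1, map_one, one_mul] at hreflp
        rcases Nat.even_or_odd n with heven | hodd
        · -- impossible
          exfalso
          obtain ⟨m, hm2⟩ := heven
          have hmn : n = 2 * m := by omega
          have hreflp' : reflect (2 * m) p = p := by rwa [hdn, hmn] at hreflp
          obtain ⟨h, hhd, hQh⟩ := exists_QQ p (by omega) hreflp'
          have hh0 : h ≠ 0 := by
            intro h0
            rw [h0, QQ_zero] at hQh
            exact hpm.ne_zero hQh.symm
          have hβh : aeval β h = 0 := by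
            have h1 := aeval_QQ (K := K) hhd α hαne
            rw [hQh, hα0] at h1
            rcases mul_eq_zero.mp h1.symm with h' | h'
            · exact absurd h' (pow_ne_zero m hαne)
            · exact h'
          have hgdvd : g ∣ h := hming ▸ minpoly.dvd F β hβh
          have := natDegree_le_of_dvd hgdvd hh0
          omega
        · -- n odd : p = X + 1, n = 1, g = X + 2
          have hev : aeval (-1 : F) p = 0 := by
            have e := aeval_reflect (K := F) (f := p) (N := p.natDegree) le_rfl (-1 : F)
              (neg_ne_zero.mpr one_ne_zero)
            rw [hreflp, hdn] at e
            rw [show ((-1 : F))⁻¹ = -1 by rw [inv_neg, inv_one]] at e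
            rw [hodd.neg_one_pow] at e
            have h3 : (2 : F) * aeval (-1 : F) p = 0 := by linear_combination e
            rcases mul_eq_zero.mp h3 with h' | h'
            · exact absurd h' h2
            · exact h'
          have hpX : p = X - C (-1 : F) := by
            rw [← minpoly.eq_X_sub_C' (-1 : F)]
            exact minpoly.eq_of_irreducible_of_monic hp hev hpm
          have hn1 : n = 1 := by
            have : p.natDegree = 1 := by rw [hpX]; exact natDegree_X_sub_C _
            omega
          have h6 : aeval α (X - C ((-1) : F)) = 0 := by rw [← hpX]; exact hα0
          simp only [map_sub, aeval_X, aeval_C] at h6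
          have hαval : α = algebraMap F K (-1) := by linear_combination h6
          have hβval : β = algebraMap F K (-2) := by
            rw [hβ, hαval, show (algebraMap F K) (-1) = -1 by simp,
              show (algebraMap F K) (-2 : F) = -2 by rw [map_neg, map_ofNat],
              show ((-1 : K))⁻¹ = -1 by rw [inv_neg, inv_one]]
            ring
          have hgval : aeval (-2 : F) g = 0 := by
            have h7 := hβg
            rw [hβval, aeval_algebraMap_apply_eq_algebraMap_eval] at h7
            exact (map_eq_zero_iff _ (algebraMap F K).injective).mp h7
          have hgX : g = X - C (-2 : F) := by
            rw [← minpoly.eq_X_sub_C' (-2 : F)]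
            exact minpoly.eq_of_irreducible_of_monic hg hgval hgm
          refine ⟨hn1, Or.inr ?_⟩
          rw [hgX, map_neg, sub_neg_eq_add]
      · -- c = -1 : p = X - 1, n = 1, g = X - 2
        have hev : aeval (1 : F) p = 0 := by
          have e := aeval_reflect (K := F) (f := p) (N := p.natDegree) le_rfl (1 : F)
            one_ne_zero
          rw [hreflp, hcm1, inv_one, one_pow, one_mul, map_mul, aeval_C] at e
          have e2 : (algebraMap F F) (-1 : F) = -1 := by simp
          rw [e2] at e
          have h3 : (2 : F) * aeval (1 : F) p = 0 := by linear_combination - e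
          rcases mul_eq_zero.mp h3 with h' | h'
          · exact absurd h' h2
          · exact h'
        have hpX : p = X - C (1 : F) := by
          rw [← minpoly.eq_X_sub_C' (1 : F)]
          exact minpoly.eq_of_irreducible_of_monic hp hev hpm
        have hn1 : n = 1 := by
          have : p.natDegree = 1 := by rw [hpX]; exact natDegree_X_sub_C _
          omega
        have h6 : aeval α (X - C ((1) : F)) = 0 := by rw [← hpX]; exact hα0
        simp only [map_sub, aeval_X, aeval_C] at h6
        have hαval : α = algebraMap F K 1 := by linear_combination h6
        have hβval : β = algebraMap F K 2 := by
          rw [hβ, hαval, show (algebraMap F K) (1 : F) = 1 by simp,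
            show (algebraMap F K) (2 : F) = 2 by rw [map_ofNat], inv_one]
          ring
        have hgval : aeval (2 : F) g = 0 := by
          have h7 := hβg
          rw [hβval, aeval_algebraMap_apply_eq_algebraMap_eval] at h7
          exact (map_eq_zero_iff _ (algebraMap F K).injective).mp h7
        have hgX : g = X - C (2 : F) := by
          rw [← minpoly.eq_X_sub_C' (2 : F)]
          exact minpoly.eq_of_irreducible_of_monic hg hgval hgm
        exact ⟨hn1, Or.inl hgX⟩
    · -- pair case
      right; left
      have hhatmonic : (hatp p).Monic := hatp_monic hpm hc0
      have hhatirr : Irreducible (hatp p) := hatp_irreducible hpm hc0 hp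
      have hinv0 : α⁻¹ ≠ 0 := inv_ne_zero hαne
      have hQαinv : aeval α⁻¹ (QQ n g) = 0 := by
        have e := aeval_reflect (f := QQ n g) (N := 2 * n) hQdeg.le α⁻¹ hinv0
        rw [reflect_QQ g hgd.le, inv_inv, hQα, mul_zero] at e
        exact e
      have hhatα : aeval α⁻¹ (hatp p) = 0 := by
        rw [show hatp p = C (p.coeff 0)⁻¹ * p.reverse from rfl, map_mul, aeval_C]
        have e : aeval α⁻¹ p.reverse = 0 := by
          have e2 := aeval_reflect (f := p) (N := p.natDegree) le_rfl α⁻¹ hinv0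
          rw [show reflect p.natDegree p = p.reverse from rfl] at e2
          rw [e2, inv_inv, hα0, mul_zero]
        rw [e, mul_zero]
      have hminhat : minpoly F α⁻¹ = hatp p :=
        (minpoly.eq_of_irreducible_of_monic hhatirr hhatα hhatmonic).symm
      have hhatdvd : hatp p ∣ QQ n g := hminhat ▸ minpoly.dvd F α⁻¹ hQαinv
      have hpnd : ¬ p ∣ hatp p := by
        intro hd
        exact hsym (eq_of_monic_dvd hpm hhatmonic hd
          (by rw [hatp_natDegree hpm hc0]) ▸ rfl) 
      obtain ⟨r, hr⟩ := hhatdvd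
      have hpr : p ∣ r := by
        have := hr ▸ hdvd
        exact (hp.prime.dvd_mul.mp this).resolve_left hpnd
      obtain ⟨s, hs⟩ := hpr
      have hdvd2 : p * hatp p ∣ QQ n g := ⟨s, by rw [hr, hs]; ring⟩
      have heq : p * hatp p = QQ n g := by
        apply eq_of_monic_dvd (hpm.mul hhatmonic) hQmonic hdvd2
        rw [natDegree_mul hpm.ne_zero hhatmonic.ne_zero, hatp_natDegree hpm hc0]
        omega
      exact ⟨hdn, hc0, hsym, heq.symm⟩
  · -- degree 2n case
    left
    exact (eq_of_monic_dvd hpm hQmonic hdvd (by omega)).symm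

end SrimAux5

namespace SrimAux6
open SrimAux SrimAux2 SrimAux3 SrimAux4 SrimAux5

variable {F : Type*} [Field F]

lemma natDegree_pos_of_nonunit {a : F[X]} (ha : a ≠ 0) (hu : ¬ IsUnit a) :
    0 < a.natDegree := by
  rcases Nat.eq_zero_or_pos a.natDegree with h | h
  · exfalso
    apply hu
    rw [Polynomial.eq_C_of_natDegree_le_zero h.le]
    exact Polynomial.isUnit_C.mpr (isUnit_iff_ne_zero.mpr (by
      intro h0
      apply ha
      rw [Polynomial.eq_C_of_natDegree_le_zero h.le, h0, map_zero]))
  · exact h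

lemma no_small_factor {p : F[X]} (hp : Irreducible p) (hpm : p.Monic)
    (hc0 : p.coeff 0 ≠ 0) (hsym : hatp p ≠ p) {k : ℕ} {h : F[X]} (hh0 : h ≠ 0)
    (hhd : h.natDegree ≤ k) (hk : k < p.natDegree) (hdvd : p ∣ QQ k h) : False := by
  haveI : Fact (Irreducible p) := ⟨hp⟩
  set K := AdjoinRoot p with hK
  set α := AdjoinRoot.root p with hα
  have hα0 : aeval α p = 0 := aeval_root hpm
  have hαne : α ≠ 0 := by
    intro hz
    rw [hz, aeval_def, eval₂_at_zero] at hα0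
    exact hc0 ((map_eq_zero_iff _ (algebraMap F K).injective).mp hα0)
  set β := α + α⁻¹ with hβ
  have hQα : aeval α (QQ k h) = 0 := by
    obtain ⟨r, hr⟩ := hdvd
    rw [hr, map_mul, hα0, zero_mul]
  have hβh : aeval β h = 0 := by
    have h1 := aeval_QQ hhd α hαne
    rw [hQα] at h1
    rcases mul_eq_zero.mp h1.symm with h' | h'
    · exact absurd h' (pow_ne_zero k hαne)
    · exact h'
  haveI : FiniteDimensional F K := (AdjoinRoot.powerBasis hpm.ne_zero).finite
  have hfinrank : Module.finrank F K = p.natDegree := by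
    rw [(AdjoinRoot.powerBasis hpm.ne_zero).finrank]
    rfl
  have hβint : IsIntegral F β := IsIntegral.of_finite F β
  set m := minpoly F β with hmdef
  have hmm : m.Monic := minpoly.monic hβint
  have hmdvd : m ∣ h := minpoly.dvd F β hβh
  have hmdeg_lt : m.natDegree < p.natDegree :=
    lt_of_le_of_lt (le_trans (natDegree_le_of_dvd hmdvd hh0) hhd) hk
  have hmdeg_dvd : m.natDegree ∣ p.natDegree := by
    have := minpoly.degree_dvd hβint
    rwa [hfinrank] at this
  have hmpos : 0 < m.natDegree := minpoly.natDegree_pos hβint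
  have hQmα : aeval α (QQ m.natDegree m) = 0 := by
    have h1 := aeval_QQ (le_refl m.natDegree) α hαne
    rw [minpoly.aeval F β, mul_zero] at h1
    exact h1
  have hpmin : p = minpoly F α := minpoly.eq_of_irreducible_of_monic hp hα0 hpm
  have hpdvdQ : p ∣ QQ m.natDegree m := hpmin ▸ minpoly.dvd F α hQmα
  have hQm_monic : (QQ m.natDegree m).Monic := QQ_monic hmm rfl
  have hQm_deg : (QQ m.natDegree m).natDegree = 2 * m.natDegree := QQ_natDegree hmm rfl
  have hple : p.natDegree ≤ 2 * m.natDegree := by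
    have := natDegree_le_of_dvd hpdvdQ hQm_monic.ne_zero
    omega
  have h2le : 2 * m.natDegree ≤ p.natDegree := by
    obtain ⟨c, hc⟩ := hmdeg_dvd
    have hc2 : 2 ≤ c := by
      rcases Nat.lt_or_ge c 2 with hlt | hge
      · interval_cases c <;> omega
      · exact hge
    have := Nat.mul_le_mul_left m.natDegree hc2
    omega
  have hpeq : p = QQ m.natDegree m :=
    eq_of_monic_dvd hpm hQm_monic hpdvdQ (by omega)
  apply hsym
  have hrev : p.reverse = p := by
    conv_lhs => rw [hpeq]
    rw [reverse_QQ hmm rfl, ← hpeq]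
  have hcz : p.coeff 0 = 1 := by
    rw [hpeq, QQ_coeff_zero]
    exact hmm.coeff_natDegree
  rw [show hatp p = C (p.coeff 0)⁻¹ * p.reverse from rfl, hcz, hrev, inv_one, map_one, one_mul]

lemma exists_g_of_pair {p : F[X]} (hp : Irreducible p) (hpm : p.Monic)
    (hc0 : p.coeff 0 ≠ 0) (hsym : hatp p ≠ p) :
    ∃ g : F[X], Irreducible g ∧ g.Monic ∧ g.natDegree = p.natDegree ∧
      QQ p.natDegree g = p * hatp p := by
  set n := p.natDegree with hn
  have hnpos : 0 < n := hp.natDegree_pos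
  have hhatm : (hatp p).Monic := hatp_monic hpm hc0
  have hhatdeg : (hatp p).natDegree = n := hatp_natDegree hpm hc0
  set P := p * hatp p with hP
  have hPm : P.Monic := hpm.mul hhatm
  have hPdeg : P.natDegree = 2 * n := by
    rw [hP, natDegree_mul hpm.ne_zero hhatm.ne_zero, hhatdeg]
    omega
  have hP0 : P.coeff 0 = 1 := by
    rw [hP, mul_coeff_zero, hatp_coeff_zero hpm hc0, mul_inv_cancel₀ hc0]
  have hmirP : P.mirror = P := by
    rw [hP, mirror_mul_of_domain, mirror_hatp hpm hc0]
    rw [← reverse_eq_mirror hc0]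
    rw [show p.reverse = C (p.coeff 0) * hatp p by
      rw [show hatp p = C (p.coeff 0)⁻¹ * p.reverse from rfl, ← mul_assoc, ← map_mul,
        mul_inv_cancel₀ hc0, map_one, one_mul]]
    calc C (p.coeff 0) * hatp p * (C (p.coeff 0)⁻¹ * p)
        = (C (p.coeff 0) * C (p.coeff 0)⁻¹) * (hatp p * p) := by ring
      _ = p * hatp p := by
          rw [← map_mul, mul_inv_cancel₀ hc0, map_one, one_mul, mul_comm]
  have hrevP : P.reverse = P := by
    rw [reverse_eq_mirror (by rw [hP0]; exact one_ne_zero), hmirP]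
  have hreflP : reflect (2 * n) P = P := by
    rw [← hPdeg, show reflect P.natDegree P = P.reverse from rfl, hrevP]
  obtain ⟨g, hgd, hQg⟩ := exists_QQ P (by omega) hreflP
  have hdegge : n ≤ g.natDegree := by
    have h1 := QQ_natDegree_le g hgd
    rw [hQg, hPdeg] at h1
    omega
  have hgdeg : g.natDegree = n := le_antisymm hgd hdegge
  have hgm : g.Monic := by
    have h1 := QQ_coeff_add (g := g) (n := n) hgd
    rw [hQg, hgdeg] at h1
    have h2 : P.coeff (n + n) = 1 := by
      have := hPm.coeff_natDegree
      rwa [hPdeg, (by ring : 2 * n = n + n)] at this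
    rw [h2] at h1
    exact h1.symm
  refine ⟨g, ?_, hgm, hgdeg, hQg⟩
  by_contra hgi
  have hgne : ¬ IsUnit g := not_isUnit_of_natDegree_pos g (by omega)
  rw [irreducible_iff] at hgi
  push_neg at hgi
  obtain ⟨a, b, hab, hau, hbu⟩ := hgi hgne
  have ha0 : a ≠ 0 := by
    intro h'
    rw [h', zero_mul] at hab
    exact hgm.ne_zero hab
  have hb0 : b ≠ 0 := by
    intro h'
    rw [h', mul_zero] at hab
    exact hgm.ne_zero hab
  have hadeg : 0 < a.natDegree := natDegree_pos_of_nonunit ha0 hau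
  have hbdeg : 0 < b.natDegree := natDegree_pos_of_nonunit hb0 hbu
  have hsum : a.natDegree + b.natDegree = n := by
    rw [← hgdeg, hab, natDegree_mul ha0 hb0]
  have hQsplit : QQ n g = QQ a.natDegree a * QQ b.natDegree b := by
    rw [hab, ← hsum]
    exact QQ_mul le_rfl le_rfl
  have hpdvdP : p ∣ P := dvd_mul_right p (hatp p)
  rw [← hQg, hQsplit] at hpdvdP
  rcases hp.prime.dvd_mul.mp hpdvdP with h | h
  · exact no_small_factor hp hpm hc0 hsym ha0 le_rfl (by omega) h
  · exact no_small_factor hp hpm hc0 hsym hb0 le_rfl (by omega) h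

lemma srim_decomp {n : ℕ} (hn : 1 ≤ n) {P : F[X]} (hP : Irreducible P) (hPm : P.Monic)
    (hPd : P.natDegree = 2 * n) (hPrev : P.reverse = P) :
    ∃ g, Irreducible g ∧ g.Monic ∧ g.natDegree = n ∧ QQ n g = P := by
  have hreflP : reflect (2 * n) P = P := by
    rw [← hPd, show reflect P.natDegree P = P.reverse from rfl, hPrev]
  obtain ⟨g, hgd, hQg⟩ := exists_QQ P (by omega) hreflP
  have hdegge : n ≤ g.natDegree := by
    have h1 := QQ_natDegree_le g hgd
    rw [hQg, hPd] at h1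
    omega
  have hgdeg : g.natDegree = n := le_antisymm hgd hdegge
  have hgm : g.Monic := by
    have h1 := QQ_coeff_add (g := g) (n := n) hgd
    rw [hQg, hgdeg] at h1
    have h2 : P.coeff (n + n) = 1 := by
      have := hPm.coeff_natDegree
      rwa [hPd, (by ring : 2 * n = n + n)] at this
    rw [h2] at h1
    exact h1.symm
  refine ⟨g, ?_, hgm, hgdeg, hQg⟩
  by_contra hgi
  have hgne : ¬ IsUnit g := not_isUnit_of_natDegree_pos g (by omega)
  rw [irreducible_iff] at hgi
  push_neg at hgi
  obtain ⟨a, b, hab, hau, hbu⟩ := hgi hgne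
  have ha0 : a ≠ 0 := by
    intro h'
    rw [h', zero_mul] at hab
    exact hgm.ne_zero hab
  have hb0 : b ≠ 0 := by
    intro h'
    rw [h', mul_zero] at hab
    exact hgm.ne_zero hab
  have hadeg : 0 < a.natDegree := natDegree_pos_of_nonunit ha0 hau
  have hbdeg : 0 < b.natDegree := natDegree_pos_of_nonunit hb0 hbu
  have hsum : a.natDegree + b.natDegree = n := by
    rw [← hgdeg, hab, natDegree_mul ha0 hb0]
  have hQsplit : QQ n g = QQ a.natDegree a * QQ b.natDegree b := by
    rw [hab, ← hsum]
    exact QQ_mul le_rfl le_rfl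
  have hQa_pos : 0 < (QQ a.natDegree a).natDegree := by
    have h1 := QQ_coeff_add (g := a) (n := a.natDegree) le_rfl
    have : (QQ a.natDegree a).coeff (a.natDegree + a.natDegree) ≠ 0 := by
      rw [h1]
      exact leadingCoeff_ne_zero.mpr ha0
    have := le_natDegree_of_ne_zero this
    omega
  have hQb_pos : 0 < (QQ b.natDegree b).natDegree := by
    have h1 := QQ_coeff_add (g := b) (n := b.natDegree) le_rfl
    have : (QQ b.natDegree b).coeff (b.natDegree + b.natDegree) ≠ 0 := by
      rw [h1]
      exact leadingCoeff_ne_zero.mpr hb0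
    have := le_natDegree_of_ne_zero this
    omega
  rw [← hQg] at hP
  rw [hQsplit] at hP
  rcases hP.isUnit_or_isUnit rfl with h | h
  · exact not_isUnit_of_natDegree_pos _ hQa_pos h
  · exact not_isUnit_of_natDegree_pos _ hQb_pos h

end SrimAux6

namespace SrimAux7
open SrimAux SrimAux2 SrimAux3 SrimAux4 SrimAux5 SrimAux6

variable {F : Type*} [Field F]

lemma QQ_one (g : F[X]) : QQ 1 g = C (g.coeff 0) * X + C (g.coeff 1) * (X ^ 2 + 1) := by
  rw [QQ, Finset.sum_range_succ, Finset.sum_range_one]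
  simp only [pow_zero, one_mul, pow_one, Nat.sub_zero, Nat.sub_self, mul_one]

lemma QQ_X_sub_two : QQ 1 (X - C (2 : F)) = (X - C 1) ^ 2 := by
  rw [QQ_one]
  have h0 : (X - C (2 : F)).coeff 0 = -2 := by simp
  have h1 : (X - C (2 : F)).coeff 1 = 1 := by simp
  rw [h0, h1, map_neg, map_one, map_ofNat]
  ring

lemma QQ_X_add_two : QQ 1 (X + C (2 : F)) = (X + C 1) ^ 2 := by
  rw [QQ_one]
  have h0 : (X + C (2 : F)).coeff 0 = 2 := by simp
  have h1 : (X + C (2 : F)).coeff 1 = 1 := by simp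
  rw [h0, h1, map_one, map_ofNat]
  ring

lemma not_irr_sq (a : F[X]) (ha : 0 < a.natDegree) : ¬ Irreducible (a ^ 2) := by
  intro h
  rcases h.isUnit_or_isUnit (pow_two a) with h' | h' <;>
    exact not_isUnit_of_natDegree_pos _ ha h'

lemma Bm_exceptions {n : ℕ} {g : F[X]} (hgd : g.natDegree = n)
    (hQi : Irreducible (QQ n g)) : g ≠ X - C 2 ∧ g ≠ X + C 2 := by
  constructor
  · rintro rfl
    have hn1 : n = 1 := by rw [← hgd, natDegree_X_sub_C]
    rw [hn1, QQ_X_sub_two] at hQi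
    exact not_irr_sq _ (by rw [natDegree_X_sub_C]; omega) hQi
  · rintro rfl
    have hn1 : n = 1 := by
      rw [← hgd]
      have : (X + C (2:F)) = X - C (-2) := by rw [map_neg, sub_neg_eq_add]
      rw [this, natDegree_X_sub_C]
    rw [hn1, QQ_X_add_two] at hQi
    apply not_irr_sq _ _ hQi
    have : (X + C (1:F)) = X - C (-1) := by rw [map_neg, sub_neg_eq_add]
    rw [this, natDegree_X_sub_C]
    omega

lemma pair_not_sq {p : F[X]} (hp : Irreducible p) (hpm : p.Monic)
    (hc0 : p.coeff 0 ≠ 0) (hsym : hatp p ≠ p) (a : F) :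
    p * hatp p ≠ (X - C a) ^ 2 := by
  intro heq
  have hXm : (X - C a).Monic := monic_X_sub_C a
  have hdX : (X - C a).natDegree = 1 := natDegree_X_sub_C a
  have hpd : p ∣ (X - C a) * (X - C a) := by
    rw [← pow_two, ← heq]; exact dvd_mul_right _ _
  have hp1 : p = X - C a := by
    rcases hp.prime.dvd_mul.mp hpd with h | h <;>
      exact eq_of_monic_dvd hpm hXm h (by rw [hdX]; exact hp.natDegree_pos)
  have hhd : hatp p ∣ (X - C a) * (X - C a) := by
    rw [← pow_two, ← heq]; exact dvd_mul_left _ _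
  have hhatm := hatp_monic hpm hc0
  have hhati := hatp_irreducible hpm hc0 hp
  have hh1 : hatp p = X - C a := by
    rcases hhati.prime.dvd_mul.mp hhd with h | h <;>
      exact eq_of_monic_dvd hhatm hXm h (by rw [hdX]; exact hhati.natDegree_pos)
  exact hsym (hh1.trans hp1.symm)

lemma monic_irr_dvd_irr {q P : F[X]} (hqm : q.Monic) (hqi : Irreducible q)
    (hPi : Irreducible P) (hPm : P.Monic) (h : q ∣ P) : q = P := by
  obtain ⟨r, hr⟩ := h
  rcases hPi.isUnit_or_isUnit hr with h' | h'
  · exact absurd h' hqi.not_isUnit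
  · have hr0 : r ≠ 0 := by
      intro h0
      rw [h0, mul_zero] at hr
      exact hPm.ne_zero hr
    have hrd : r.natDegree = 0 := natDegree_eq_zero_of_isUnit h'
    apply eq_of_monic_dvd hqm hPm ⟨r, hr⟩
    rw [hr, natDegree_mul hqm.ne_zero hr0, hrd]
    omega

lemma divisors_of_pair {p : F[X]} (hp : Irreducible p) (hpm : p.Monic)
    (hc0 : p.coeff 0 ≠ 0) (hsym : hatp p ≠ p) :
    {q : F[X] | q.Monic ∧ Irreducible q ∧ q ∣ p * hatp p} = {p, hatp p} := by
  have hhatm := hatp_monic hpm hc0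
  have hhati := hatp_irreducible hpm hc0 hp
  ext q
  simp only [Set.mem_setOf_eq, Set.mem_insert_iff, Set.mem_singleton_iff]
  constructor
  · rintro ⟨hqm, hqi, hqd⟩
    rcases hqi.prime.dvd_mul.mp hqd with h | h
    · left
      exact monic_irr_dvd_irr hqm hqi hp hpm h
    · right
      exact monic_irr_dvd_irr hqm hqi hhati hhatm h
  · rintro (rfl | rfl)
    · exact ⟨hpm, hp, dvd_mul_right _ _⟩
    · exact ⟨hhatm, hhati, dvd_mul_left _ _⟩

variable (F) in
def Aneg (n : ℕ) : Set F[X] :=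
  {p : F[X] | Irreducible p ∧ p.Monic ∧ p.natDegree = 2 * n ∧ p.reverse = p}

variable (F) in
def Apos (n : ℕ) : Set (Set F[X]) :=
  {s : Set F[X] | ∃ p : F[X], Irreducible p ∧ p.Monic ∧ p.natDegree = n ∧
    p.coeff 0 ≠ 0 ∧ C (p.coeff 0)⁻¹ * p.reverse ≠ p ∧
    s = {p, C (p.coeff 0)⁻¹ * p.reverse}}

variable (F) in
def Bm (n : ℕ) : Set F[X] :=
  {g : F[X] | Irreducible g ∧ g.Monic ∧ g.natDegree = n ∧ g ≠ X - C 2 ∧ g ≠ X + C 2}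

variable (F) in
def Bneg (n : ℕ) : Set F[X] := {g : F[X] | g ∈ Bm F n ∧ Irreducible (QQ n g)}

variable (F) in
def Bpos (n : ℕ) : Set F[X] := {g : F[X] | g ∈ Bm F n ∧ ¬ Irreducible (QQ n g)}

variable (F) in
def divSet (n : ℕ) (g : F[X]) : Set F[X] := {q : F[X] | q.Monic ∧ Irreducible q ∧ q ∣ QQ n g}

lemma Bm_decomp (h2 : (2 : F) ≠ 0) {n : ℕ} (hn : 1 ≤ n) {g : F[X]} (hg : g ∈ Bm F n) :
    Irreducible (QQ n g) ∨ ∃ p : F[X], Irreducible p ∧ p.Monic ∧ p.natDegree = n ∧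
      p.coeff 0 ≠ 0 ∧ hatp p ≠ p ∧ QQ n g = p * hatp p := by
  obtain ⟨hgi, hgm, hgd, hne1, hne2⟩ := hg
  have hQm : (QQ n g).Monic := QQ_monic hgm hgd
  have hQd : (QQ n g).natDegree = 2 * n := QQ_natDegree hgm hgd
  obtain ⟨p, hpm, hpi, hpd⟩ := (QQ n g).exists_monic_irreducible_factor
    (not_isUnit_of_natDegree_pos _ (by omega))
  rcases key hn h2 hgi hgm hgd hpi hpm hpd with h | h | h
  · left; rw [h]; exact hpi
  · right; exact ⟨p, hpi, hpm, h.1, h.2.1, h.2.2.1, h.2.2.2⟩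
  · exfalso
    rcases h.2 with h' | h'
    · exact hne1 h'
    · exact hne2 h'

lemma Aneg_eq (h2 : (2 : F) ≠ 0) {n : ℕ} (hn : 1 ≤ n) :
    Aneg F n = QQ n '' (Bneg F n) := by
  ext P
  constructor
  · rintro ⟨hPi, hPm, hPd, hPrev⟩
    obtain ⟨g, hgI, hgm, hgd, hQg⟩ := srim_decomp hn hPi hPm hPd hPrev
    have hQi : Irreducible (QQ n g) := by rw [hQg]; exact hPi
    obtain ⟨hne1, hne2⟩ := Bm_exceptions hgd hQi
    exact ⟨g, ⟨⟨hgI, hgm, hgd, hne1, hne2⟩, hQi⟩, hQg⟩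
  · rintro ⟨g, ⟨⟨hgi, hgm, hgd, _, _⟩, hQi⟩, rfl⟩
    exact ⟨hQi, QQ_monic hgm hgd, QQ_natDegree hgm hgd, reverse_QQ hgm hgd⟩

lemma Apos_eq (h2 : (2 : F) ≠ 0) {n : ℕ} (hn : 1 ≤ n) :
    Apos F n = divSet F n '' (Bpos F n) := by
  ext s
  constructor
  · rintro ⟨p, hpi, hpm, hpd, hc0, hsym, rfl⟩
    have hsym' : hatp p ≠ p := hsym
    obtain ⟨g, hgI, hgm, hgd', hQg⟩ := exists_g_of_pair hpi hpm hc0 hsym'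
    rw [hpd] at hgd' hQg
    have hnotirr : ¬ Irreducible (QQ n g) := by
      rw [hQg]
      intro h
      rcases h.isUnit_or_isUnit rfl with h' | h'
      · exact not_isUnit_of_natDegree_pos _ (by omega : 0 < p.natDegree) h'
      · exact not_isUnit_of_natDegree_pos _
          (by rw [hatp_natDegree hpm hc0]; omega) h'
    have hne1 : g ≠ X - C 2 := by
      rintro rfl
      have hn1 : n = 1 := by rw [← hgd', natDegree_X_sub_C]
      rw [hn1, QQ_X_sub_two] at hQg
      exact pair_not_sq hpi hpm hc0 hsym' 1 hQg.symm
    have hne2 : g ≠ X + C 2 := by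
      rintro rfl
      have hn1 : n = 1 := by
        rw [← hgd', show (X + C (2:F)) = X - C (-2) by rw [map_neg, sub_neg_eq_add],
          natDegree_X_sub_C]
      rw [hn1, QQ_X_add_two,
        show (X + C (1:F)) = X - C (-1) by rw [map_neg, sub_neg_eq_add]] at hQg
      exact pair_not_sq hpi hpm hc0 hsym' (-1) hQg.symm
    refine ⟨g, ⟨⟨hgI, hgm, hgd', hne1, hne2⟩, hnotirr⟩, ?_⟩
    rw [divSet, hQg]
    exact divisors_of_pair hpi hpm hc0 hsym'
  · rintro ⟨g, ⟨hBm, hNotIrr⟩, rfl⟩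
    rcases Bm_decomp h2 hn hBm with h | ⟨p, hpi, hpm, hpd, hc0, hsym, hQ⟩
    · exact absurd h hNotIrr
    · refine ⟨p, hpi, hpm, hpd, hc0, hsym, ?_⟩
      rw [divSet, hQ]
      exact divisors_of_pair hpi hpm hc0 hsym

lemma injOn_QQ {n : ℕ} : Set.InjOn (QQ n) (Bneg F n) := by
  intro g₁ h₁ g₂ h₂ heq
  exact QQ_inj h₁.1.2.2.1.le h₂.1.2.2.1.le heq

lemma injOn_divSet (h2 : (2 : F) ≠ 0) {n : ℕ} (hn : 1 ≤ n) :
    Set.InjOn (divSet F n) (Bpos F n) := by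
  intro g₁ hg₁ g₂ hg₂ heq
  rcases Bm_decomp h2 hn hg₁.1 with h | ⟨p₁, hp₁i, hp₁m, hp₁d, hc₁, hs₁, hQ₁⟩
  · exact absurd h hg₁.2
  rcases Bm_decomp h2 hn hg₂.1 with h | ⟨p₂, hp₂i, hp₂m, hp₂d, hc₂, hs₂, hQ₂⟩
  · exact absurd h hg₂.2
  have hmem : p₂ ∈ divSet F n g₂ := ⟨hp₂m, hp₂i, by rw [hQ₂]; exact dvd_mul_right _ _⟩
  rw [← heq] at hmem
  rw [divSet, hQ₁, divisors_of_pair hp₁i hp₁m hc₁ hs₁] at hmem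
  apply QQ_inj hg₁.1.2.2.1.le hg₂.1.2.2.1.le
  rcases hmem with rfl | rfl
  · rw [hQ₁, hQ₂]
  · rw [hQ₁, hQ₂, hatp_hatp hp₁m hc₁, mul_comm]

lemma finite_deg_le [Fintype F] (n : ℕ) : {g : F[X] | g.natDegree ≤ n}.Finite := by
  apply Set.Finite.of_finite_image (f := fun g => fun i : Fin (n + 1) => g.coeff i)
  · exact Set.toFinite _
  · intro g hg h hh heq
    ext i
    rcases le_or_gt i n with hi | hi
    · exact congrFun heq ⟨i, by omega⟩
    · rw [coeff_eq_zero_of_natDegree_lt (by simp only [Set.mem_setOf_eq] at hg; omega),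
        coeff_eq_zero_of_natDegree_lt (by simp only [Set.mem_setOf_eq] at hh; omega)]

lemma count_eq [Fintype F] (h2 : (2 : F) ≠ 0) {n : ℕ} (hn : 1 ≤ n) :
    (Aneg F n).ncard + (Apos F n).ncard = (Bm F n).ncard := by
  have hBfin : (Bm F n).Finite :=
    (finite_deg_le n).subset (fun g hg => by
      simp only [Set.mem_setOf_eq]
      exact hg.2.2.1.le)
  have hBnegfin : (Bneg F n).Finite := hBfin.subset (fun g hg => hg.1)
  have hBposfin : (Bpos F n).Finite := hBfin.subset (fun g hg => hg.1)
  have h1 : (Aneg F n).ncard = (Bneg F n).ncard := by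
    rw [Aneg_eq h2 hn, Set.ncard_image_of_injOn injOn_QQ]
  have h2' : (Apos F n).ncard = (Bpos F n).ncard := by
    rw [Apos_eq h2 hn, Set.ncard_image_of_injOn (injOn_divSet h2 hn)]
  have hunion : Bm F n = Bneg F n ∪ Bpos F n := by
    ext g
    constructor
    · intro hg
      by_cases h : Irreducible (QQ n g)
      · exact Or.inl ⟨hg, h⟩
      · exact Or.inr ⟨hg, h⟩
    · rintro (h | h) <;> exact h.1
  have hdisj : Disjoint (Bneg F n) (Bpos F n) :=
    Set.disjoint_left.mpr (fun g hg₁ hg₂ => hg₂.2 hg₁.2)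
  rw [h1, h2', hunion, Set.ncard_union_eq hdisj hBnegfin hBposfin]

end SrimAux7

namespace SrimAux8
open SrimAux SrimAux2 SrimAux3 SrimAux4 SrimAux5 SrimAux6 SrimAux7

variable {F : Type*} [Field F]

lemma two_ne_zero' [Fintype F] (hq : Odd (Fintype.card F)) : (2 : F) ≠ 0 := by
  intro h
  have hc : ringChar F = 2 := by
    haveI inst := ringChar.charP F
    have hdvd : ringChar F ∣ 2 := by
      have h' : ((2 : ℕ) : F) = 0 := by exact_mod_cast h
      exact (CharP.cast_eq_zero_iff F (ringChar F) 2).mp h'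
    rcases (Nat.dvd_prime Nat.prime_two).mp hdvd with h1 | h1
    · exact absurd h1 (CharP.char_ne_one F (ringChar F))
    · exact h1
  have heven := FiniteField.even_card_iff_char_two.mp hc
  rcases hq with ⟨k, hk⟩
  omega

lemma two_ne_neg_two [Fintype F] (hq : Odd (Fintype.card F)) : (2 : F) ≠ -2 := by
  intro h
  apply two_ne_zero' hq
  have h4 : (2 : F) * 2 = 0 := by
    rw [two_mul]
    linear_combination h
  exact mul_self_eq_zero.mp h4

lemma eq_X_sub_C_of_monic_deg_one {g : F[X]} (hgm : g.Monic) (hgd : g.natDegree = 1) :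
    g = X - C (-(g.coeff 0)) := by
  have hdeg : g.degree ≤ 1 := by
    rw [degree_eq_natDegree hgm.ne_zero, hgd]
    exact_mod_cast le_rfl
  have h1 : g.coeff 1 = 1 := by
    have := hgm.coeff_natDegree
    rwa [hgd] at this
  have := eq_X_add_C_of_degree_le_one hdeg
  rw [h1, map_one, one_mul] at this
  rw [map_neg, sub_neg_eq_add]
  exact this

lemma inj_X_sub_C : Function.Injective (fun a : F => X - C a) := by
  intro a b h
  simp only [sub_right_inj] at h
  exact C_injective h

lemma Bm_one_eq : Bm F 1 = (fun a : F => X - C a) '' {a : F | a ≠ 2 ∧ a ≠ -2} := by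
  ext g
  constructor
  · rintro ⟨hgi, hgm, hgd, hne1, hne2⟩
    refine ⟨-(g.coeff 0), ⟨?_, ?_⟩, (eq_X_sub_C_of_monic_deg_one hgm hgd).symm⟩
    · intro h
      exact hne1 (by rw [eq_X_sub_C_of_monic_deg_one hgm hgd, h])
    · intro h
      apply hne2
      rw [eq_X_sub_C_of_monic_deg_one hgm hgd, h, map_neg, sub_neg_eq_add]
  · rintro ⟨a, ⟨ha2, ham2⟩, rfl⟩
    refine ⟨irreducible_X_sub_C a, monic_X_sub_C a, natDegree_X_sub_C a, ?_, ?_⟩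
    · intro h
      simp only [sub_right_inj] at h
      exact ha2 (C_injective h)
    · intro h
      rw [show (X + C (2:F)) = X - C (-2) by rw [map_neg, sub_neg_eq_add]] at h
      simp only [sub_right_inj] at h
      exact ham2 (C_injective h)

lemma IM_one_eq : {p : F[X] | Irreducible p ∧ p.Monic ∧ p.natDegree = 1 ∧ p.coeff 0 ≠ 0}
    = (fun a : F => X - C a) '' {a : F | a ≠ 0} := by
  ext g
  constructor
  · rintro ⟨hgi, hgm, hgd, h0⟩
    refine ⟨-(g.coeff 0), ?_, (eq_X_sub_C_of_monic_deg_one hgm hgd).symm⟩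
    simp only [Set.mem_setOf_eq, neg_ne_zero]
    exact h0
  · rintro ⟨a, ha, rfl⟩
    refine ⟨irreducible_X_sub_C a, monic_X_sub_C a, natDegree_X_sub_C a, ?_⟩
    simp only [coeff_sub, coeff_X_zero, coeff_C_zero, zero_sub, neg_ne_zero]
    exact ha

lemma Bm_big_eq {n : ℕ} (hn : 1 < n) :
    Bm F n = {p : F[X] | Irreducible p ∧ p.Monic ∧ p.natDegree = n ∧ p.coeff 0 ≠ 0} := by
  ext g
  constructor
  · rintro ⟨hgi, hgm, hgd, _, _⟩
    refine ⟨hgi, hgm, hgd, ?_⟩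
    intro h0
    obtain ⟨r, hr⟩ := X_dvd_iff.mpr h0
    rcases hgi.isUnit_or_isUnit hr with h' | h'
    · exact Polynomial.not_isUnit_X h'
    · have hr0 : r ≠ 0 := by
        intro h''
        rw [h'', mul_zero] at hr
        exact hgm.ne_zero hr
      have : g.natDegree = 1 := by
        rw [hr, natDegree_mul X_ne_zero hr0, natDegree_X, natDegree_eq_zero_of_isUnit h']
      omega
  · rintro ⟨hgi, hgm, hgd, h0⟩
    refine ⟨hgi, hgm, hgd, ?_, ?_⟩
    · intro h
      rw [h, natDegree_X_sub_C] at hgd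
      omega
    · intro h
      rw [h, show (X + C (2:F)) = X - C (-2) by rw [map_neg, sub_neg_eq_add],
        natDegree_X_sub_C] at hgd
      omega

lemma ncard_Bm_one [Fintype F] (hq : Odd (Fintype.card F)) :
    (Bm F 1).ncard = Fintype.card F - 2 := by
  rw [Bm_one_eq, Set.ncard_image_of_injOn inj_X_sub_C.injOn]
  have hset : {a : F | a ≠ 2 ∧ a ≠ -2} = ({2, -2} : Set F)ᶜ := by
    ext a
    simp only [Set.mem_setOf_eq, Set.mem_compl_iff, Set.mem_insert_iff,
      Set.mem_singleton_iff, not_or]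
  rw [hset]
  have h := Set.ncard_add_ncard_compl ({2, -2} : Set F)
  rw [Set.ncard_pair (two_ne_neg_two hq), Nat.card_eq_fintype_card] at h
  omega

lemma ncard_IM_one [Fintype F] :
    {p : F[X] | Irreducible p ∧ p.Monic ∧ p.natDegree = 1 ∧ p.coeff 0 ≠ 0}.ncard
      = Fintype.card F - 1 := by
  rw [IM_one_eq, Set.ncard_image_of_injOn inj_X_sub_C.injOn]
  have hset : {a : F | a ≠ 0} = ({0} : Set F)ᶜ := by
    ext a
    simp
  rw [hset]
  have h := Set.ncard_add_ncard_compl ({0} : Set F)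
  rw [Set.ncard_singleton, Nat.card_eq_fintype_card] at h
  omega

lemma card_ge_two [Fintype F] : 2 ≤ Fintype.card F := Fintype.one_lt_card

end SrimAux8

open SrimAux SrimAux2 SrimAux3 SrimAux4 SrimAux5 SrimAux6 SrimAux7 SrimAux8 in
/-- For odd prime power `q`, `SRIM⁻_n(q) + SRIM⁺_n(q)` equals `IM_1(q) − 1` when
`n = 1` and `IM_n(q)` when `n > 1`. -/
theorem srim_add_srim_pairs {F : Type*} [Field F] [Fintype F]
    (hq : Odd (Fintype.card F)) :
    (({p : F[X] | Irreducible p ∧ p.Monic ∧ p.natDegree = 2 * 1 ∧ p.reverse = p}.ncard : ℤ)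
      + ({s : Set F[X] | ∃ p : F[X], Irreducible p ∧ p.Monic ∧ p.natDegree = 1 ∧
            p.coeff 0 ≠ 0 ∧ C (p.coeff 0)⁻¹ * p.reverse ≠ p ∧
            s = {p, C (p.coeff 0)⁻¹ * p.reverse}}.ncard : ℤ)
      = ({p : F[X] | Irreducible p ∧ p.Monic ∧ p.natDegree = 1 ∧
            p.coeff 0 ≠ 0}.ncard : ℤ) - 1)
    ∧ ∀ n : ℕ, 1 < n →
      (({p : F[X] | Irreducible p ∧ p.Monic ∧ p.natDegree = 2 * n ∧ p.reverse = p}.ncard : ℤ)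
        + ({s : Set F[X] | ∃ p : F[X], Irreducible p ∧ p.Monic ∧ p.natDegree = n ∧
              p.coeff 0 ≠ 0 ∧ C (p.coeff 0)⁻¹ * p.reverse ≠ p ∧
              s = {p, C (p.coeff 0)⁻¹ * p.reverse}}.ncard : ℤ)
        = ({p : F[X] | Irreducible p ∧ p.Monic ∧ p.natDegree = n ∧
              p.coeff 0 ≠ 0}.ncard : ℤ)) := by
  have h2 : (2 : F) ≠ 0 := two_ne_zero' hq
  constructor
  · show ((Aneg F 1).ncard : ℤ) + ((Apos F 1).ncard : ℤ)
      = ({p : F[X] | Irreducible p ∧ p.Monic ∧ p.natDegree = 1 ∧ p.coeff 0 ≠ 0}.ncard : ℤ) - 1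
    have hc := count_eq h2 (le_refl 1)
    have hBm1 := ncard_Bm_one hq
    have hIM1 := ncard_IM_one (F := F)
    have hcard := card_ge_two (F := F)
    rw [hIM1]
    have : (Aneg F 1).ncard + (Apos F 1).ncard = Fintype.card F - 2 := by rw [hc, hBm1]
    omega
  · intro n hn
    show ((Aneg F n).ncard : ℤ) + ((Apos F n).ncard : ℤ)
      = ({p : F[X] | Irreducible p ∧ p.Monic ∧ p.natDegree = n ∧ p.coeff 0 ≠ 0}.ncard : ℤ)
    have hc := count_eq h2 (by omega : 1 ≤ n)
    rw [Bm_big_eq hn] at hc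
    exact_mod_cast hc
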